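/- Let α be a totally real algebraic integer of degree d with minimal polynomial P, and let L be an integer such that L + αⱼ > 2 for every real conjugate αⱼ of α. Then the polynomial Q(X) = X^d · P(X + 1/X − L) is a monic palindromic polynomial of degree 2d all of whose complex roots are real. -/

import Mathlib

open Polynomial

/-- Let `α` be a totally real algebraic integer of degree `d` with minimal
polynomial `P` (over `ℚ`), and let `L` be an integer with `L + αⱼ > 2` for every (real)
conjugate `αⱼ` of `α`.  Then `Q(X) = X^d · P(X + 1/X − L)`, i.e.
`Q = ∑ᵢ P.coeff i · (X² + 1 − L·X)ⁱ · X^{d−i}`, is a monic palindromic polynomial of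
degree `2d` all of whose complex roots are real. -/
theorem stmt_0 (α : ℂ) (hint : IsIntegral ℤ α) (d : ℕ) (hd : 0 < d)
    (P : Polynomial ℚ) (hP : P = minpoly ℚ α) (hdeg : P.natDegree = d)
    (htotreal : ∀ z : ℂ, Polynomial.aeval z P = 0 → z.im = 0)
    (L : ℤ) (hL : ∀ z : ℂ, Polynomial.aeval z P = 0 → 2 < (L : ℝ) + z.re)
    (Q : Polynomial ℂ)
    (hQ : Q = ∑ i ∈ Finset.range (d + 1),
      C ((P.map (algebraMap ℚ ℂ)).coeff i) *
        (X ^ 2 + 1 - C (L : ℂ) * X) ^ i * X ^ (d - i)) :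
    Q.Monic ∧ Q.natDegree = 2 * d ∧ Q.reverse = Q ∧
    ∀ z : ℂ, Q.eval z = 0 → z.im = 0 := by
  have hPmonic : P.Monic := hP ▸ minpoly.monic (hint.tower_top)
  set Pc : Polynomial ℂ := P.map (algebraMap ℚ ℂ) with hPc
  have hPcmonic : Pc.Monic := hPmonic.map _
  have hPcdeg : Pc.natDegree = d := (hPmonic.natDegree_map _).trans hdeg
  have hcd : Pc.coeff d = 1 := by
    have := hPcmonic.coeff_natDegree
    rwa [hPcdeg] at this
  -- key identity
  have key : ∀ z : ℂ, z ≠ 0 → Q.eval z = z ^ d * Pc.eval (z + z⁻¹ - L) := by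
    intro z hz
    rw [hQ, eval_finset_sum]
    rw [Pc.eval_eq_sum_range, hPcdeg, Finset.mul_sum]
    apply Finset.sum_congr rfl
    intro i hi
    have hi' : i ≤ d := Nat.lt_succ_iff.mp (Finset.mem_range.mp hi)
    simp only [eval_mul, eval_pow, eval_C, eval_X, eval_sub, eval_add, eval_one]
    have h1 : z ^ 2 + 1 - (L : ℂ) * z = z * (z + z⁻¹ - L) := by
      field_simp
    rw [h1, mul_pow]
    rw [show z ^ d = z ^ i * z ^ (d - i) by rw [← pow_add, Nat.add_sub_cancel' hi']]
    ring
  -- degrees of summands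
  have hbase : (X ^ 2 + 1 - C (L : ℂ) * X).natDegree = 2 := by
    compute_degree!
  have hbasemonic : (X ^ 2 + 1 - C (L : ℂ) * X : Polynomial ℂ).Monic := by
    unfold Polynomial.Monic
    rw [Polynomial.leadingCoeff, hbase]
    compute_degree!
  have hterm : ∀ i ≤ d, (C (Pc.coeff i) *
      (X ^ 2 + 1 - C (L : ℂ) * X) ^ i * X ^ (d - i)).natDegree ≤ d + i := by
    intro i hi
    calc _ ≤ (C (Pc.coeff i)).natDegree + ((X ^ 2 + 1 - C (L : ℂ) * X) ^ i).natDegree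
            + (X ^ (d - i) : Polynomial ℂ).natDegree := by
            refine le_trans (natDegree_mul_le) ?_
            gcongr
            exact natDegree_mul_le
      _ ≤ 0 + 2 * i + (d - i) := by
            gcongr
            · exact le_of_eq (natDegree_C _)
            · exact le_trans natDegree_pow_le (by rw [hbase]; ring_nf; exact le_rfl)
            · exact le_of_eq (natDegree_X_pow _)
      _ ≤ d + i := by omega
  have hcoeff2d : Q.coeff (2 * d) = 1 := by
    rw [hQ, finset_sum_coeff]
    rw [Finset.sum_eq_single d]
    · have : (C (Pc.coeff d) * (X ^ 2 + 1 - C (L : ℂ) * X) ^ d * X ^ (d - d)) =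
          (X ^ 2 + 1 - C (L : ℂ) * X) ^ d := by
        rw [hcd, map_one, one_mul, Nat.sub_self, pow_zero, mul_one]
      rw [this]
      have hm : ((X ^ 2 + 1 - C (L : ℂ) * X) ^ d).Monic := hbasemonic.pow d
      have hdeg2 : ((X ^ 2 + 1 - C (L : ℂ) * X) ^ d).natDegree = 2 * d := by
        rw [hbasemonic.natDegree_pow, hbase]; ring
      rw [← hdeg2]; exact hm.coeff_natDegree
    · intro i hi hne
      have hi' : i ≤ d := Nat.lt_succ_iff.mp (Finset.mem_range.mp hi)
      apply coeff_eq_zero_of_natDegree_lt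
      exact lt_of_le_of_lt (hterm i hi') (by omega)
    · intro h; exact absurd (Finset.self_mem_range_succ d) h
  have hdegle : Q.natDegree ≤ 2 * d := by
    rw [hQ]
    refine natDegree_sum_le_of_forall_le _ _ ?_
    intro i hi
    have hi' : i ≤ d := Nat.lt_succ_iff.mp (Finset.mem_range.mp hi)
    exact le_trans (hterm i hi') (by omega)
  have hQdeg : Q.natDegree = 2 * d := by
    refine le_antisymm hdegle (le_natDegree_of_ne_zero ?_)
    rw [hcoeff2d]; exact one_ne_zero
  have hQmonic : Q.Monic := by
    unfold Polynomial.Monic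
    rw [Polynomial.leadingCoeff, hQdeg, hcoeff2d]
  -- reverse
  have hrev : Q.reverse = Q := by
    apply Polynomial.eq_of_infinite_eval_eq
    apply Set.Infinite.mono (s := {z : ℂ | z ≠ 0})
    · intro z hz
      have hz : z ≠ 0 := hz
      have hinv : z⁻¹ ≠ 0 := inv_ne_zero hz
      letI : Invertible z⁻¹ := invertibleOfNonzero hinv
      have h1 : Q.reverse.eval z * z⁻¹ ^ Q.natDegree = Q.eval z⁻¹ := by
        have := eval₂_reverse_mul_pow (RingHom.id ℂ) z⁻¹ Q
        rwa [invOf_eq_inv, inv_inv] at this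
      have h2 := key z⁻¹ hinv
      rw [inv_inv] at h2
      have h3 := key z hz
      show Q.reverse.eval z = Q.eval z
      have hcomm : z⁻¹ + z - (L : ℂ) = z + z⁻¹ - (L : ℂ) := by ring
      rw [hcomm] at h2
      have h4 : Q.reverse.eval z = Q.eval z⁻¹ * z ^ (2 * d) := by
        have := congrArg (· * z ^ Q.natDegree) h1
        rw [hQdeg] at this
        rw [← this]
        rw [mul_assoc, ← mul_pow, inv_mul_cancel₀ hz, one_pow, mul_one]
      rw [h4, h2, h3]
      rw [two_mul, pow_add, inv_pow]
      field_simp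
    · exact Set.infinite_of_injective_forall_mem (f := fun n : ℕ => (n + 1 : ℂ))
        (fun a b h => by simpa using h)
        (fun n => by simp only [Set.mem_setOf_eq]; exact Nat.cast_add_one_ne_zero n)
  refine ⟨hQmonic, hQdeg, hrev, ?_⟩
  intro z hzero
  have hz0 : z ≠ 0 := by
    intro h
    rw [h, hQ, eval_finset_sum] at hzero
    rw [Finset.sum_eq_single d] at hzero
    · simp [hcd, zero_pow, hd.ne'] at hzero
    · intro i hi hne
      have hi' : i ≤ d := Nat.lt_succ_iff.mp (Finset.mem_range.mp hi)
      have : d - i ≠ 0 := by omega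
      simp [zero_pow this]
    · intro h; exact absurd (Finset.self_mem_range_succ d) h
  have hkey := key z hz0
  rw [hzero] at hkey
  have hpz : Pc.eval (z + z⁻¹ - L) = 0 := by
    have := hkey.symm
    rcases mul_eq_zero.mp this with h | h
    · exact absurd (pow_eq_zero_iff (by omega) |>.mp h) hz0
    · exact h
  set w : ℂ := z + z⁻¹ - L with hw
  have haev : Polynomial.aeval w P = 0 := by
    rw [aeval_def, ← eval_map]; exact hpz
  have hwim : w.im = 0 := htotreal w haev
  have hwre : 2 < (L : ℝ) + w.re := hL w haev
  -- z + z⁻¹ = w + L, real t with t > 2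
  set t : ℝ := (L : ℝ) + w.re with ht
  have hzz : z + z⁻¹ = (t : ℂ) := by
    have hwc : (w : ℂ) = (w.re : ℂ) := by
      rw [Complex.ext_iff]; simp [hwim]
    have : z + z⁻¹ = w + (L : ℂ) := by rw [hw]; ring
    rw [this, hwc, ht]
    push_cast
    ring
  -- z² - t z + 1 = 0
  have hquad : z ^ 2 - (t : ℂ) * z + 1 = 0 := by
    have := congrArg (· * z) hzz
    field_simp at this
    linear_combination this
  -- imaginary part analysis
  by_contra hy
  have him : 2 * z.re * z.im - t * z.im = 0 := by
    have := congrArg Complex.im hquad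
    simp only [Complex.add_im, Complex.sub_im, Complex.mul_im, pow_two, Complex.ofReal_im,
      Complex.ofReal_re, Complex.one_im, Complex.zero_im] at this
    linarith
  have hre : z.re ^ 2 - z.im ^ 2 - t * z.re + 1 = 0 := by
    have := congrArg Complex.re hquad
    simpa [Complex.add_re, Complex.sub_re, Complex.mul_re, pow_two] using this
  have hx : z.re = t / 2 := by
    rcases mul_eq_zero.mp (show (2 * z.re - t) * z.im = 0 by linarith [him]) with h | h
    · linarith
    · exact absurd h hy
  rw [hx] at hre
  nlinarith [sq_nonneg z.im, sq_nonneg (t - 2)]
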